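/- arXiv:math/9906140 — 4 statements merged into one kernel-verified Lean document; each statement's English description precedes it below -/
import Mathlib

section
/- Let a, b, u : ℝ → ℝ with a, b differentiable, and suppose a'(x) = u(x)·b(x), b(x) = 2·u(x), and b'(x) = −u(x)·a(x) for all x ∈ ℝ, and suppose there exist x₀ ∈ ℝ and μ ∈ ℝ with a(x₀)² + b(x₀)² = 4μ². Then a satisfies the Riccati equation a'(x) + a(x)²/2 = 2μ² for all x ∈ ℝ. -/
/-- If differentiable `a, b` satisfy `a' = u·b`, `b = 2·u`, `b' = −u·a` and
`a(x₀)² + b(x₀)² = 4μ²` for some `x₀, μ`, then `a` satisfies the Riccati equation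
`a' + a²/2 = 2μ²` everywhere. -/
theorem bargmann_system_gives_riccati
    (a b u : ℝ → ℝ) (ha : Differentiable ℝ a) (hb : Differentiable ℝ b)
    (h1 : ∀ x : ℝ, deriv a x = u x * b x)
    (h2 : ∀ x : ℝ, b x = 2 * u x)
    (h3 : ∀ x : ℝ, deriv b x = -(u x * a x))
    (x₀ μ : ℝ) (h0 : a x₀ ^ 2 + b x₀ ^ 2 = 4 * μ ^ 2) :
    ∀ x : ℝ, deriv a x + a x ^ 2 / 2 = 2 * μ ^ 2 := by
  have hf : Differentiable ℝ (fun x => a x ^ 2 + b x ^ 2) := by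
    exact (ha.pow 2).add (hb.pow 2)
  have hderiv : ∀ x : ℝ, deriv (fun x => a x ^ 2 + b x ^ 2) x = 0 := by
    intro x
    rw [deriv_fun_add (f := fun x => a x ^ 2) (g := fun x => b x ^ 2) ((ha x).pow 2) ((hb x).pow 2), deriv_fun_pow (ha x) 2,
      deriv_fun_pow (hb x) 2, h1 x, h3 x]
    ring
  have hconst : ∀ x : ℝ, a x ^ 2 + b x ^ 2 = 4 * μ ^ 2 := by
    intro x
    have := is_const_of_deriv_eq_zero hf hderiv x x₀
    rw [this, h0]
  intro x
  have : deriv a x = b x ^ 2 / 2 := by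
    rw [h1 x, h2 x]; ring
  rw [this]
  have := hconst x
  linarith
end

section
/- Let μ, φ₀ ∈ ℝ and λ ∈ ℂ with 2iλ ≠ μ. Then the spinor field on the surface of revolution defined by ψ(x,y) := exp(λy)·exp(−iλx)·(2iλ + μ·tanh(μx − φ₀))/(2iλ − μ) and φ(x,y) := μ·exp(λy)·exp(−iλx)·sech(μx − φ₀)/(2iλ − μ) satisfies the two-dimensional Dirac equation ∂ψ = p·φ and ∂̄φ = −p·ψ with the real-valued potential p(x,y) := (μ/2)·sech(μx − φ₀). -/
/-- For `μ, φ₀ ∈ ℝ`, `λ ∈ ℂ` with `2iλ ≠ μ`, the static one-soliton spinor field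
`ψ(x,y) = exp(λy)·exp(−iλx)·(2iλ + μ·tanh(μx − φ₀))/(2iλ − μ)`,
`φ(x,y) = μ·exp(λy)·exp(−iλx)·sech(μx − φ₀)/(2iλ − μ)` satisfies the two-dimensional Dirac
equation `∂ψ = p·φ`, `∂̄φ = −p·ψ` with real potential `p(x,y) = (μ/2)·sech(μx − φ₀)`, where
`∂f := (1/2)(∂f/∂x + i·∂f/∂y)` and `∂̄f := (1/2)(∂f/∂x − i·∂f/∂y)`. -/
theorem static_one_soliton_spinor_field_solves_dirac
    (μ φ₀ : ℝ) (l : ℂ) (h : 2 * Complex.I * l ≠ (μ : ℂ)) :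
    let ψ : ℝ → ℝ → ℂ := fun x y => Complex.exp (l * (y : ℂ)) * Complex.exp (-(Complex.I * l * (x : ℂ)))
      * (2 * Complex.I * l + (μ : ℂ) * (Real.tanh (μ * x - φ₀) : ℂ)) / (2 * Complex.I * l - (μ : ℂ))
    let φ : ℝ → ℝ → ℂ := fun x y => (μ : ℂ) * Complex.exp (l * (y : ℂ))
      * Complex.exp (-(Complex.I * l * (x : ℂ)))
      * ((1 / Real.cosh (μ * x - φ₀) : ℝ) : ℂ) / (2 * Complex.I * l - (μ : ℂ))
    ∀ x y : ℝ,
      ((1 / 2 : ℂ) * (deriv (fun x' : ℝ => ψ x' y) x + Complex.I * deriv (fun y' : ℝ => ψ x y') y)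
        = ((μ / 2 * (1 / Real.cosh (μ * x - φ₀)) : ℝ) : ℂ) * φ x y)
      ∧ ((1 / 2 : ℂ) * (deriv (fun x' : ℝ => φ x' y) x - Complex.I * deriv (fun y' : ℝ => φ x y') y)
        = -(((μ / 2 * (1 / Real.cosh (μ * x - φ₀)) : ℝ) : ℂ) * ψ x y)) := by
  intro ψ φ x y
  have hD : 2 * Complex.I * l - (μ : ℂ) ≠ 0 := sub_ne_zero.mpr h
  have hc : Real.cosh (μ * x - φ₀) ≠ 0 := (Real.cosh_pos _).ne'
  have hlin : HasDerivAt (fun x' : ℝ => μ * x' - φ₀) μ x := by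
    simpa using ((hasDerivAt_id x).const_mul μ).sub_const φ₀
  have hch : HasDerivAt (fun x' : ℝ => Real.cosh (μ * x' - φ₀)) (Real.sinh (μ * x - φ₀) * μ) x :=
    (Real.hasDerivAt_cosh _).comp x hlin
  have hsh : HasDerivAt (fun x' : ℝ => Real.sinh (μ * x' - φ₀)) (Real.cosh (μ * x - φ₀) * μ) x :=
    (Real.hasDerivAt_sinh _).comp x hlin
  have key : Real.cosh (μ * x - φ₀) ^ 2 - Real.sinh (μ * x - φ₀) ^ 2 = 1 :=
    Real.cosh_sq_sub_sinh_sq _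
  have hT : HasDerivAt (fun x' : ℝ => Real.tanh (μ * x' - φ₀))
      (μ * (1 / Real.cosh (μ * x - φ₀)) ^ 2) x := by
    have h1 := hsh.div hch hc
    simp only [Real.tanh_eq_sinh_div_cosh]
    refine h1.congr_deriv (Eq.symm ?_)
    field_simp
    linear_combination (-μ) * key
  have hS : HasDerivAt (fun x' : ℝ => 1 / Real.cosh (μ * x' - φ₀))
      (-(μ * Real.sinh (μ * x - φ₀)) / Real.cosh (μ * x - φ₀) ^ 2) x := by
    have h1 := (hasDerivAt_const x (1 : ℝ)).div hch hc
    refine h1.congr_deriv (Eq.symm ?_)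
    field_simp
    ring
  have hEx : HasDerivAt (fun x' : ℝ => Complex.exp (-(Complex.I * l * (x' : ℂ))))
      (Complex.exp (-(Complex.I * l * (x : ℂ))) * (-(Complex.I * l))) x := by
    have h1 : HasDerivAt (fun z : ℂ => Complex.exp (-(Complex.I * l * z)))
        (Complex.exp (-(Complex.I * l * (x : ℂ))) * (-(Complex.I * l * 1))) (x : ℂ) :=
      (((hasDerivAt_id (x : ℂ)).const_mul (Complex.I * l)).neg).cexp
    rw [mul_one] at h1
    exact h1.comp_ofReal
  have hEy : HasDerivAt (fun y' : ℝ => Complex.exp (l * (y' : ℂ)))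
      (Complex.exp (l * (y : ℂ)) * l) y := by
    have h1 : HasDerivAt (fun z : ℂ => Complex.exp (l * z))
        (Complex.exp (l * (y : ℂ)) * (l * 1)) (y : ℂ) :=
      ((hasDerivAt_id (y : ℂ)).const_mul l).cexp
    rw [mul_one] at h1
    exact h1.comp_ofReal
  have hTc : HasDerivAt (fun x' : ℝ => ((Real.tanh (μ * x' - φ₀) : ℝ) : ℂ))
      (((μ * (1 / Real.cosh (μ * x - φ₀)) ^ 2 : ℝ)) : ℂ) x := hT.ofReal_comp
  have hSc : HasDerivAt (fun x' : ℝ => ((1 / Real.cosh (μ * x' - φ₀) : ℝ) : ℂ))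
      (((-(μ * Real.sinh (μ * x - φ₀)) / Real.cosh (μ * x - φ₀) ^ 2 : ℝ)) : ℂ) x := hS.ofReal_comp
  have hA : HasDerivAt (fun x' : ℝ => 2 * Complex.I * l + (μ : ℂ) * ((Real.tanh (μ * x' - φ₀) : ℝ) : ℂ))
      ((μ : ℂ) * ((μ * (1 / Real.cosh (μ * x - φ₀)) ^ 2 : ℝ) : ℂ)) x :=
    (hTc.const_mul (μ : ℂ)).const_add _
  have hψx : HasDerivAt (fun x' : ℝ => ψ x' y)
      ((Complex.exp (l * (y : ℂ)) * (Complex.exp (-(Complex.I * l * (x : ℂ))) * (-(Complex.I * l)))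
          * (2 * Complex.I * l + (μ : ℂ) * ((Real.tanh (μ * x - φ₀) : ℝ) : ℂ))
        + Complex.exp (l * (y : ℂ)) * Complex.exp (-(Complex.I * l * (x : ℂ)))
          * ((μ : ℂ) * ((μ * (1 / Real.cosh (μ * x - φ₀)) ^ 2 : ℝ) : ℂ)))
        / (2 * Complex.I * l - (μ : ℂ))) x := by
    have h1 := ((hEx.const_mul (Complex.exp (l * (y : ℂ)))).mul hA).div_const
      (2 * Complex.I * l - (μ : ℂ))
    simp only [ψ]
    exact h1
  have hψy : HasDerivAt (fun y' : ℝ => ψ x y')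
      (Complex.exp (l * (y : ℂ)) * l * Complex.exp (-(Complex.I * l * (x : ℂ)))
        * (2 * Complex.I * l + (μ : ℂ) * ((Real.tanh (μ * x - φ₀) : ℝ) : ℂ))
        / (2 * Complex.I * l - (μ : ℂ))) y := by
    have h1 := ((hEy.mul_const (Complex.exp (-(Complex.I * l * (x : ℂ))))).mul_const
      (2 * Complex.I * l + (μ : ℂ) * ((Real.tanh (μ * x - φ₀) : ℝ) : ℂ))).div_const
      (2 * Complex.I * l - (μ : ℂ))
    simp only [ψ]
    convert h1 using 2
  have hφx : HasDerivAt (fun x' : ℝ => φ x' y)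
      (((μ : ℂ) * Complex.exp (l * (y : ℂ)) * (Complex.exp (-(Complex.I * l * (x : ℂ))) * (-(Complex.I * l)))
          * ((1 / Real.cosh (μ * x - φ₀) : ℝ) : ℂ)
        + (μ : ℂ) * Complex.exp (l * (y : ℂ)) * Complex.exp (-(Complex.I * l * (x : ℂ)))
          * ((-(μ * Real.sinh (μ * x - φ₀)) / Real.cosh (μ * x - φ₀) ^ 2 : ℝ) : ℂ))
        / (2 * Complex.I * l - (μ : ℂ))) x := by
    have h1 := ((hEx.const_mul ((μ : ℂ) * Complex.exp (l * (y : ℂ)))).mul hSc).div_const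
      (2 * Complex.I * l - (μ : ℂ))
    simp only [φ]
    exact h1
  have hφy : HasDerivAt (fun y' : ℝ => φ x y')
      ((μ : ℂ) * (Complex.exp (l * (y : ℂ)) * l) * Complex.exp (-(Complex.I * l * (x : ℂ)))
        * ((1 / Real.cosh (μ * x - φ₀) : ℝ) : ℂ)
        / (2 * Complex.I * l - (μ : ℂ))) y := by
    have h1 := (((hEy.const_mul (μ : ℂ)).mul_const (Complex.exp (-(Complex.I * l * (x : ℂ))))).mul_const
      ((1 / Real.cosh (μ * x - φ₀) : ℝ) : ℂ)).div_const (2 * Complex.I * l - (μ : ℂ))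
    simp only [φ]
    convert h1 using 2
  have hcC : Complex.cosh ((μ : ℂ) * (x : ℂ) - (φ₀ : ℂ)) ≠ 0 := by
    rw [show ((μ : ℂ) * (x : ℂ) - (φ₀ : ℂ)) = ((μ * x - φ₀ : ℝ) : ℂ) by push_cast; ring,
      ← Complex.ofReal_cosh]
    exact_mod_cast hc
  refine ⟨?_, ?_⟩
  · rw [hψx.deriv, hψy.deriv]
    simp only [φ, Real.tanh_eq_sinh_div_cosh]
    rw [← mul_div_assoc Complex.I, ← add_div, ← mul_div_assoc, ← mul_div_assoc,
      div_eq_div_iff hD hD]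
    push_cast
    field_simp [hcC]
    ring
  · rw [hφx.deriv, hφy.deriv]
    simp only [ψ, Real.tanh_eq_sinh_div_cosh]
    rw [← mul_div_assoc Complex.I, div_sub_div_same, ← mul_div_assoc,
      ← mul_div_assoc, ← neg_div, div_eq_div_iff hD hD]
    push_cast
    field_simp [hcC]
    ring
end

section
/- Let ψ, φ : ℝ² → ℂ be differentiable (as functions of (x,y)) and p : ℝ² → ℝ, and suppose ∂_z ψ = p·φ and ∂_z̄ φ = −p·ψ, where ∂_z f := (1/2)(∂f/∂x − i·∂f/∂y) and ∂_z̄ f := (1/2)(∂f/∂x + i·∂f/∂y). Then the following three identities hold everywhere, expressing that the 1-forms of the generalized Weierstrass representation are closed: (i) ∂_z̄(conj(ψ)²) + ∂_z(conj(φ)²) = 0; (ii) ∂_z̄(φ²) + ∂_z(ψ²) = 0; (iii) ∂_z̄(φ·conj(ψ)) = ∂_z(ψ·conj(φ)). -/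
/-- Partial derivative in the first variable of a function on `ℝ²`. -/
noncomputable def pderivX (f : ℝ × ℝ → ℂ) (q : ℝ × ℝ) : ℂ :=
  deriv (fun x : ℝ => f (x, q.2)) q.1

/-- Partial derivative in the second variable of a function on `ℝ²`. -/
noncomputable def pderivY (f : ℝ × ℝ → ℂ) (q : ℝ × ℝ) : ℂ :=
  deriv (fun y : ℝ => f (q.1, y)) q.2

/-- `∂_z f := (1/2)(∂f/∂x − i·∂f/∂y)`. -/
noncomputable def dz (f : ℝ × ℝ → ℂ) (q : ℝ × ℝ) : ℂ :=
  (1 / 2 : ℂ) * (pderivX f q - Complex.I * pderivY f q)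

/-- `∂_z̄ f := (1/2)(∂f/∂x + i·∂f/∂y)`. -/
noncomputable def dzbar (f : ℝ × ℝ → ℂ) (q : ℝ × ℝ) : ℂ :=
  (1 / 2 : ℂ) * (pderivX f q + Complex.I * pderivY f q)

lemma diffX (f : ℝ × ℝ → ℂ) (hf : Differentiable ℝ f) (q : ℝ × ℝ) :
    Differentiable ℝ (fun x : ℝ => f (x, q.2)) :=
  hf.comp (differentiable_id.prodMk (differentiable_const _))

lemma diffY (f : ℝ × ℝ → ℂ) (hf : Differentiable ℝ f) (q : ℝ × ℝ) :
    Differentiable ℝ (fun y : ℝ => f (q.1, y)) :=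
  hf.comp ((differentiable_const _).prodMk differentiable_id)

lemma pderivX_mul (f g : ℝ × ℝ → ℂ) (hf : Differentiable ℝ f) (hg : Differentiable ℝ g)
    (q : ℝ × ℝ) :
    pderivX (fun q' => f q' * g q') q = pderivX f q * g q + f q * pderivX g q := by
  unfold pderivX
  exact deriv_mul ((diffX f hf q) q.1) ((diffX g hg q) q.1)

lemma pderivY_mul (f g : ℝ × ℝ → ℂ) (hf : Differentiable ℝ f) (hg : Differentiable ℝ g)
    (q : ℝ × ℝ) :
    pderivY (fun q' => f q' * g q') q = pderivY f q * g q + f q * pderivY g q := by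
  unfold pderivY
  exact deriv_mul ((diffY f hf q) q.2) ((diffY g hg q) q.2)

lemma pderivX_conj (f : ℝ × ℝ → ℂ) (hf : Differentiable ℝ f) (q : ℝ × ℝ) :
    pderivX (fun q' => starRingEnd ℂ (f q')) q = starRingEnd ℂ (pderivX f q) := by
  unfold pderivX
  have h := ((diffX f hf q) q.1).hasDerivAt.star
  simp only [starRingEnd_apply]
  exact h.deriv

lemma pderivY_conj (f : ℝ × ℝ → ℂ) (hf : Differentiable ℝ f) (q : ℝ × ℝ) :
    pderivY (fun q' => starRingEnd ℂ (f q')) q = starRingEnd ℂ (pderivY f q) := by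
  unfold pderivY
  have h := ((diffY f hf q) q.2).hasDerivAt.star
  simp only [starRingEnd_apply]
  exact h.deriv

lemma dz_mul (f g : ℝ × ℝ → ℂ) (hf : Differentiable ℝ f) (hg : Differentiable ℝ g)
    (q : ℝ × ℝ) :
    dz (fun q' => f q' * g q') q = dz f q * g q + f q * dz g q := by
  unfold dz
  rw [pderivX_mul f g hf hg q, pderivY_mul f g hf hg q]; ring

lemma dzbar_mul (f g : ℝ × ℝ → ℂ) (hf : Differentiable ℝ f) (hg : Differentiable ℝ g)
    (q : ℝ × ℝ) :
    dzbar (fun q' => f q' * g q') q = dzbar f q * g q + f q * dzbar g q := by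
  unfold dzbar
  rw [pderivX_mul f g hf hg q, pderivY_mul f g hf hg q]; ring

lemma dz_conj (f : ℝ × ℝ → ℂ) (hf : Differentiable ℝ f) (q : ℝ × ℝ) :
    dz (fun q' => starRingEnd ℂ (f q')) q = starRingEnd ℂ (dzbar f q) := by
  unfold dz dzbar
  rw [pderivX_conj f hf q, pderivY_conj f hf q]
  simp only [map_mul, map_add, map_sub, map_div₀, map_one, map_ofNat, Complex.conj_I]
  ring

lemma dzbar_conj (f : ℝ × ℝ → ℂ) (hf : Differentiable ℝ f) (q : ℝ × ℝ) :
    dzbar (fun q' => starRingEnd ℂ (f q')) q = starRingEnd ℂ (dz f q) := by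
  unfold dz dzbar
  rw [pderivX_conj f hf q, pderivY_conj f hf q]
  simp only [map_mul, map_add, map_sub, map_div₀, map_one, map_ofNat, Complex.conj_I]
  ring

/-- If differentiable `ψ, φ : ℝ² → ℂ` solve the Dirac equation
`∂_z ψ = p·φ`, `∂_z̄ φ = −p·ψ` with real-valued `p`, then the three closedness identities of
the generalized Weierstrass representation hold:
(i) `∂_z̄(conj ψ²) + ∂_z(conj φ²) = 0`; (ii) `∂_z̄(φ²) + ∂_z(ψ²) = 0`;
(iii) `∂_z̄(φ·conj ψ) = ∂_z(ψ·conj φ)`. -/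
theorem weierstrass_representation_one_forms_closed
    (ψ φ : ℝ × ℝ → ℂ) (p : ℝ × ℝ → ℝ)
    (hψ : Differentiable ℝ ψ) (hφ : Differentiable ℝ φ)
    (h1 : ∀ q : ℝ × ℝ, dz ψ q = (p q : ℂ) * φ q)
    (h2 : ∀ q : ℝ × ℝ, dzbar φ q = -((p q : ℂ) * ψ q)) :
    ∀ q : ℝ × ℝ,
      (dzbar (fun q' => (starRingEnd ℂ (ψ q')) ^ 2) q
        + dz (fun q' => (starRingEnd ℂ (φ q')) ^ 2) q = 0)
      ∧ (dzbar (fun q' => (φ q') ^ 2) q + dz (fun q' => (ψ q') ^ 2) q = 0)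
      ∧ (dzbar (fun q' => φ q' * starRingEnd ℂ (ψ q')) q
        = dz (fun q' => ψ q' * starRingEnd ℂ (φ q')) q) := by
  intro q
  have hψc : Differentiable ℝ (fun q' => starRingEnd ℂ (ψ q')) := hψ.star
  have hφc : Differentiable ℝ (fun q' => starRingEnd ℂ (φ q')) := hφ.star
  have eψ2 : (fun q' => (ψ q') ^ 2) = fun q' => ψ q' * ψ q' := by
    funext q'; ring
  have eφ2 : (fun q' => (φ q') ^ 2) = fun q' => φ q' * φ q' := by
    funext q'; ring
  have eψc2 : (fun q' => (starRingEnd ℂ (ψ q')) ^ 2)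
      = fun q' => starRingEnd ℂ ((ψ q') ^ 2) := by
    funext q'; rw [map_pow]
  have eφc2 : (fun q' => (starRingEnd ℂ (φ q')) ^ 2)
      = fun q' => starRingEnd ℂ ((φ q') ^ 2) := by
    funext q'; rw [map_pow]
  have hii : dzbar (fun q' => (φ q') ^ 2) q + dz (fun q' => (ψ q') ^ 2) q = 0 := by
    rw [eψ2, eφ2, dzbar_mul φ φ hφ hφ q, dz_mul ψ ψ hψ hψ q, h1 q, h2 q]; ring
  refine ⟨?_, hii, ?_⟩
  · rw [eψc2, eφc2, dzbar_conj (fun q' => (ψ q') ^ 2) (hψ.pow 2) q, dz_conj (fun q' => (φ q') ^ 2) (hφ.pow 2) q,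
      ← map_add, add_comm, hii, map_zero]
  · rw [dzbar_mul φ _ hφ hψc q, dz_mul ψ _ hψ hφc q,
      dzbar_conj ψ hψ q, dz_conj φ hφ q, h1 q, h2 q]
    simp [map_mul, Complex.conj_ofReal]
    ring
end

section
/- Let μ ∈ ℝ and λ ∈ ℂ with 2iλ ≠ μ. For every t ∈ ℝ, the time-deformed spinor field ψ_t(x,y) := exp(λ(y − ix))·(2iλ + μ·tanh(μx − μ³t))/(2iλ − μ) and φ_t(x,y) := μ·exp(λ(y − ix))·sech(μx − μ³t)/(2iλ − μ) satisfies the two-dimensional Dirac equation ∂ψ_t = p_t·φ_t and ∂̄φ_t = −p_t·ψ_t with the real-valued potential p_t(x,y) := (μ/2)·sech(μx − μ³t). -/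
/-- For `μ ∈ ℝ`, `λ ∈ ℂ` with `2iλ ≠ μ`, and every deformation time `t ∈ ℝ`,
the time-deformed one-soliton spinor field
`ψ_t(x,y) = exp(λ(y − ix))·(2iλ + μ·tanh(μx − μ³t))/(2iλ − μ)`,
`φ_t(x,y) = μ·exp(λ(y − ix))·sech(μx − μ³t)/(2iλ − μ)` satisfies the two-dimensional Dirac
equation `∂ψ_t = p_t·φ_t`, `∂̄φ_t = −p_t·ψ_t` with real potential
`p_t(x,y) = (μ/2)·sech(μx − μ³t)`, where `∂f := (1/2)(∂f/∂x + i·∂f/∂y)` and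
`∂̄f := (1/2)(∂f/∂x − i·∂f/∂y)`. -/
theorem deformed_one_soliton_spinor_field_solves_dirac
    (μ : ℝ) (l : ℂ) (h : 2 * Complex.I * l ≠ (μ : ℂ)) :
    ∀ t : ℝ,
    let ψ : ℝ → ℝ → ℂ := fun x y => Complex.exp (l * ((y : ℂ) - Complex.I * (x : ℂ)))
      * (2 * Complex.I * l + (μ : ℂ) * (Real.tanh (μ * x - μ ^ 3 * t) : ℂ))
      / (2 * Complex.I * l - (μ : ℂ))
    let φ : ℝ → ℝ → ℂ := fun x y => (μ : ℂ) * Complex.exp (l * ((y : ℂ) - Complex.I * (x : ℂ)))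
      * ((1 / Real.cosh (μ * x - μ ^ 3 * t) : ℝ) : ℂ) / (2 * Complex.I * l - (μ : ℂ))
    ∀ x y : ℝ,
      ((1 / 2 : ℂ) * (deriv (fun x' : ℝ => ψ x' y) x + Complex.I * deriv (fun y' : ℝ => ψ x y') y)
        = ((μ / 2 * (1 / Real.cosh (μ * x - μ ^ 3 * t)) : ℝ) : ℂ) * φ x y)
      ∧ ((1 / 2 : ℂ) * (deriv (fun x' : ℝ => φ x' y) x - Complex.I * deriv (fun y' : ℝ => φ x y') y)
        = -(((μ / 2 * (1 / Real.cosh (μ * x - μ ^ 3 * t)) : ℝ) : ℂ) * ψ x y)) := by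
  intro t ψ φ x y
  have hc0 : Real.cosh (μ * x - μ ^ 3 * t) ≠ 0 := (Real.cosh_pos _).ne'
  have hcC : ((Real.cosh (μ * x - μ ^ 3 * t) : ℝ) : ℂ) ≠ 0 := by exact_mod_cast hc0
  have hD : (2 * Complex.I * l - (μ : ℂ)) ≠ 0 := sub_ne_zero.mpr h
  have hcs : Real.cosh (μ * x - μ ^ 3 * t) ^ 2 - Real.sinh (μ * x - μ ^ 3 * t) ^ 2 = 1 :=
    Real.cosh_sq_sub_sinh_sq _
  have hu : HasDerivAt (fun x' : ℝ => μ * x' - μ ^ 3 * t) μ x := by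
    simpa using ((hasDerivAt_id x).const_mul μ).sub_const (μ ^ 3 * t)
  have hcosh : HasDerivAt (fun x' : ℝ => Real.cosh (μ * x' - μ ^ 3 * t))
      (Real.sinh (μ * x - μ ^ 3 * t) * μ) x := (Real.hasDerivAt_cosh _).comp x hu
  have hsinh : HasDerivAt (fun x' : ℝ => Real.sinh (μ * x' - μ ^ 3 * t))
      (Real.cosh (μ * x - μ ^ 3 * t) * μ) x := (Real.hasDerivAt_sinh _).comp x hu
  have htanh := (hsinh.div hcosh hc0)
  have hsech := (hasDerivAt_const x (1 : ℝ)).div hcosh hc0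
  have hrex : HasDerivAt (fun x' : ℝ => (x' : ℂ)) 1 x := by
    exact (hasDerivAt_id x).ofReal_comp
  have hrey : HasDerivAt (fun y' : ℝ => (y' : ℂ)) 1 y := by
    exact (hasDerivAt_id y).ofReal_comp
  have hexpx := (((hrex.const_mul Complex.I).const_sub (y : ℂ)).const_mul l).cexp
  have hexpy := ((hrey.sub_const (Complex.I * (x : ℂ))).const_mul l).cexp
  have hψx := (hexpx.mul ((htanh.ofReal_comp.const_mul (μ : ℂ)).const_add
      (2 * Complex.I * l))).div_const (2 * Complex.I * l - (μ : ℂ))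
  have hψy := (hexpy.mul_const
      (2 * Complex.I * l + (μ : ℂ) * (Real.tanh (μ * x - μ ^ 3 * t) : ℂ))).div_const
      (2 * Complex.I * l - (μ : ℂ))
  have hφx := ((hexpx.const_mul (μ : ℂ)).mul hsech.ofReal_comp).div_const
      (2 * Complex.I * l - (μ : ℂ))
  have hφy := ((hexpy.const_mul (μ : ℂ)).mul_const
      ((1 / Real.cosh (μ * x - μ ^ 3 * t) : ℝ) : ℂ)).div_const
      (2 * Complex.I * l - (μ : ℂ))
  simp only [ψ, φ, Real.tanh_eq_sinh_div_cosh, Pi.mul_apply, Pi.div_apply] at hψx hψy hφx hφy ⊢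
  rw [hψx.deriv, hψy.deriv, hφx.deriv, hφy.deriv]
  have hnum : Real.cosh (μ * x - μ ^ 3 * t) * μ * Real.cosh (μ * x - μ ^ 3 * t)
      - Real.sinh (μ * x - μ ^ 3 * t) * (Real.sinh (μ * x - μ ^ 3 * t) * μ) = μ := by
    linear_combination μ * hcs
  have h1 : (Real.cosh (μ * x - μ ^ 3 * t) * μ * Real.cosh (μ * x - μ ^ 3 * t)
      - Real.sinh (μ * x - μ ^ 3 * t) * (Real.sinh (μ * x - μ ^ 3 * t) * μ))
      / Real.cosh (μ * x - μ ^ 3 * t) ^ 2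
      = μ * (1 / Real.cosh (μ * x - μ ^ 3 * t)) * (1 / Real.cosh (μ * x - μ ^ 3 * t)) := by
    rw [hnum]; field_simp
  have h2 : (0 * Real.cosh (μ * x - μ ^ 3 * t)
      - 1 * (Real.sinh (μ * x - μ ^ 3 * t) * μ)) / Real.cosh (μ * x - μ ^ 3 * t) ^ 2
      = -(μ * (Real.sinh (μ * x - μ ^ 3 * t) / Real.cosh (μ * x - μ ^ 3 * t))
        * (1 / Real.cosh (μ * x - μ ^ 3 * t))) := by
    field_simp; ring
  rw [h1, h2]
  simp only [Complex.ofReal_div, Complex.ofReal_mul, Complex.ofReal_one, Complex.ofReal_neg,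
    Complex.ofReal_ofNat, Complex.ofReal_inv, one_div]
  set C : ℂ := ((Real.cosh (μ * x - μ ^ 3 * t) : ℝ) : ℂ) with hC
  set S : ℂ := ((Real.sinh (μ * x - μ ^ 3 * t) : ℝ) : ℂ) with hS
  set E : ℂ := Complex.exp (l * ((y : ℂ) - Complex.I * (x : ℂ))) with hE
  set D : ℂ := 2 * Complex.I * l - (μ : ℂ) with hDdef
  clear_value C S E D
  constructor
  · field_simp [hcC, hD]
    ring
  · field_simp [hcC, hD]
    ring
end
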